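/- arXiv:2105.09098 — 3 statements merged into one kernel-verified Lean document; each statement's English description precedes it below -/
import Mathlib

section
/- For a bounded operator A between Hilbert spaces and any bounded operator B, the equality AA*A = AB*A holds if and only if P_A B P_{A*} = A, where P_A and P_{A*} are the orthogonal projections onto the closures of range(A) and range(A*). -/
open ContinuousLinearMap
set_option linter.unusedSectionVars false

/-- The orthogonal projection onto the closure of the range of `A`. -/
noncomputable def projCR {E F : Type*} [NormedAddCommGroup E] [InnerProductSpace ℂ E]
    [NormedAddCommGroup F] [InnerProductSpace ℂ F] [CompleteSpace F]
    (A : E →L[ℂ] F) : F →L[ℂ] F :=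
  (LinearMap.range (A : E →ₗ[ℂ] F)).topologicalClosure.subtypeL ∘L
    Submodule.orthogonalProjectionOnto (LinearMap.range (A : E →ₗ[ℂ] F)).topologicalClosure

variable {H K : Type*} [NormedAddCommGroup H] [InnerProductSpace ℂ H] [CompleteSpace H]
  [NormedAddCommGroup K] [InnerProductSpace ℂ K] [CompleteSpace K]

private lemma apply_eq_zero_of_mem_orth (A : H →L[ℂ] K) {v : H}
    (hv : v ∈ (LinearMap.range ((adjoint A : K →L[ℂ] H) : K →ₗ[ℂ] H))ᗮ) : A v = 0 := by
  have h1 : (inner ℂ (A v) (A v) : ℂ) = 0 := by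
    rw [← adjoint_inner_right, ← inner_conj_symm,
      (show inner ℂ ((adjoint A) (A v)) v = 0 from
        hv _ (LinearMap.mem_range_self (adjoint A : K →ₗ[ℂ] H) (A v))), map_zero]
  exact inner_self_eq_zero.mp h1

private lemma orth_closure (A : H →L[ℂ] K) :
    ((LinearMap.range (A : H →ₗ[ℂ] K)).topologicalClosure)ᗮ = (LinearMap.range (A : H →ₗ[ℂ] K))ᗮ := by
  rw [← Submodule.orthogonal_orthogonal_eq_closure, Submodule.triorthogonal_eq_orthogonal]

private lemma projCR_apply_mem (A : H →L[ℂ] K) {z : K}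
    (hz : z ∈ (LinearMap.range (A : H →ₗ[ℂ] K)).topologicalClosure) : projCR A z = z := by
  exact Submodule.starProjection_eq_self_iff.mpr hz

private lemma projCR_apply_orth (A : H →L[ℂ] K) {z : K}
    (hz : z ∈ (LinearMap.range (A : H →ₗ[ℂ] K))ᗮ) : projCR A z = 0 := by
  rw [← orth_closure] at hz
  simp [projCR, Submodule.orthogonalProjectionOnto_apply_of_mem_orthogonal hz]

private lemma projCR_adjoint (A : H →L[ℂ] K) : adjoint (projCR A) = projCR A := by
  haveI : CompleteSpace ((LinearMap.range (A : H →ₗ[ℂ] K)).topologicalClosure : Submodule ℂ K) :=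
    (Submodule.isClosed_topologicalClosure _).completeSpace_coe
  exact (isSelfAdjoint_starProjection _).adjoint_eq

private lemma comp_projCR_adjoint (A : H →L[ℂ] K) (x : H) :
    A (projCR (adjoint A) x) = A x := by
  have hv : x - projCR (adjoint A) x ∈ (LinearMap.range ((adjoint A : K →L[ℂ] H) : K →ₗ[ℂ] H))ᗮ := by
    rw [← orth_closure]
    exact Submodule.sub_starProjection_mem_orthogonal x
  have := apply_eq_zero_of_mem_orth A hv
  rw [map_sub, sub_eq_zero] at this
  exact this.symm

private lemma projCR_comp_apply (A : H →L[ℂ] K) (x : H) : projCR A (A x) = A x :=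
  projCR_apply_mem A ((LinearMap.range (A : H →ₗ[ℂ] K)).le_topologicalClosure (LinearMap.mem_range_self _ x))

theorem stmt2 (A B : H →L[ℂ] K) :
    A ∘L ((adjoint A) ∘L A) = A ∘L ((adjoint B) ∘L A) ↔
      (projCR A) ∘L (B ∘L (projCR (adjoint A))) = A := by
  constructor
  · intro h
    -- first prove the adjoint identity
    have hstar : projCR (adjoint A) ∘L (adjoint B ∘L projCR A) = adjoint A := by
      ext z
      have key : ∀ w ∈ closure ((LinearMap.range (A : H →ₗ[ℂ] K) : Submodule ℂ K) : Set K),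
          projCR (adjoint A) (adjoint B w) = adjoint A w := by
        have hrange : ∀ x : H, projCR (adjoint A) (adjoint B (A x)) = adjoint A (A x) := by
          intro x
          have hmem : adjoint A (A x) - adjoint B (A x) ∈ (LinearMap.range ((adjoint A : K →L[ℂ] H) : K →ₗ[ℂ] H))ᗮ := by
            intro u hu
            obtain ⟨y, rfl⟩ := hu
            have hpt : A (adjoint A (A x)) = A (adjoint B (A x)) :=
              congrFun (congrArg DFunLike.coe h) x
            rw [ContinuousLinearMap.coe_coe, adjoint_inner_left, map_sub, hpt, sub_self, inner_zero_right]
          have h0 : projCR (adjoint A) (adjoint A (A x) - adjoint B (A x)) = 0 :=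
            projCR_apply_orth (adjoint A) hmem
          have h1 : projCR (adjoint A) (adjoint A (A x)) = adjoint A (A x) :=
            projCR_comp_apply (adjoint A) (A x)
          rw [map_sub, h1, sub_eq_zero] at h0
          exact h0.symm
        intro w hw
        refine Set.EqOn.closure (s := ((LinearMap.range (A : H →ₗ[ℂ] K) : Submodule ℂ K) : Set K))
          (f := fun w => projCR (adjoint A) (adjoint B w)) (g := fun w => adjoint A w)
          ?_ ((projCR (adjoint A)).continuous.comp (adjoint B).continuous)
          (adjoint A).continuous hw
        rintro u ⟨x, rfl⟩
        exact hrange x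
      have hz1 : projCR A z ∈ closure ((LinearMap.range (A : H →ₗ[ℂ] K) : Submodule ℂ K) : Set K) := by
        have : projCR A z ∈ (LinearMap.range (A : H →ₗ[ℂ] K)).topologicalClosure :=
          ((Submodule.orthogonalProjectionOnto (LinearMap.range (A : H →ₗ[ℂ] K)).topologicalClosure z)).2
        rwa [← Submodule.topologicalClosure_coe]
      have hz2 : adjoint A (z - projCR A z) = 0 := by
        have hv : z - projCR A z ∈ (LinearMap.range (A : H →ₗ[ℂ] K))ᗮ := by
          rw [← orth_closure]
          exact Submodule.sub_starProjection_mem_orthogonal z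
        refine apply_eq_zero_of_mem_orth (adjoint A) ?_
        rwa [adjoint_adjoint]
      have := key _ hz1
      simp only [coe_comp', Function.comp_apply]
      rw [this]
      rw [map_sub, sub_eq_zero] at hz2
      exact hz2.symm
    -- take adjoints of hstar
    have := congrArg adjoint hstar
    rwa [adjoint_comp, adjoint_comp, adjoint_adjoint, adjoint_adjoint, projCR_adjoint,
      projCR_adjoint, ContinuousLinearMap.comp_assoc] at this
  · intro h
    have hstar : projCR (adjoint A) ∘L (adjoint B ∘L projCR A) = adjoint A := by
      have := congrArg adjoint h
      rwa [adjoint_comp, adjoint_comp, projCR_adjoint, projCR_adjoint,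
        ContinuousLinearMap.comp_assoc] at this
    ext x
    have hx : projCR (adjoint A) (adjoint B (projCR A (A x))) = adjoint A (A x) :=
      congrFun (congrArg DFunLike.coe hstar) (A x)
    rw [projCR_comp_apply] at hx
    simp only [coe_comp', Function.comp_apply]
    rw [← hx, comp_projCR_adjoint]
end

section
/- Let A, B ∈ L(H,K) with A, B having closed range. Then A ≤* B in the star order if and only if A† ≤* B† in the star order. -/
open ContinuousLinearMap

/-- `Td` is the (bounded) Moore-Penrose inverse of `T`: `T Td = P_T`, `Td T = P_{T*}`,
and `Td T Td = Td`. -/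
def IsMPInv {E F : Type*} [NormedAddCommGroup E] [InnerProductSpace ℂ E] [CompleteSpace E]
    [NormedAddCommGroup F] [InnerProductSpace ℂ F] [CompleteSpace F]
    (T : E →L[ℂ] F) (Td : F →L[ℂ] E) : Prop :=
  T ∘L Td = projCR T ∧ Td ∘L T = projCR (adjoint T) ∧ Td ∘L (T ∘L Td) = Td

section Aux

variable {E E' F G : Type*} [NormedAddCommGroup E] [InnerProductSpace ℂ E] [CompleteSpace E]
  [NormedAddCommGroup E'] [InnerProductSpace ℂ E'] [CompleteSpace E']
  [NormedAddCommGroup F] [InnerProductSpace ℂ F] [CompleteSpace F]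

lemma projCR_apply_mem_s11 (T : E →L[ℂ] F) (x : F) :
    projCR T x ∈ (LinearMap.range (T : E →ₗ[ℂ] F)).topologicalClosure := by
  simp only [projCR, comp_apply, Submodule.subtypeL_apply]
  exact Submodule.coe_mem _

lemma projCR_apply_of_mem (T : E →L[ℂ] F) {x : F}
    (hx : x ∈ (LinearMap.range (T : E →ₗ[ℂ] F)).topologicalClosure) : projCR T x = x := by
  simp only [projCR, comp_apply, Submodule.subtypeL_apply]
  exact Submodule.starProjection_eq_self_iff.2 hx

lemma projCR_comp (T : E →L[ℂ] F) : projCR T ∘L T = T := by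
  ext x
  exact projCR_apply_of_mem T
    (Submodule.le_topologicalClosure _ (LinearMap.mem_range_self _ x))

lemma adjoint_projCR (T : E →L[ℂ] F) : adjoint (projCR T) = projCR T :=
  (isSelfAdjoint_starProjection _).adjoint_eq

lemma proj_congr {U V : Submodule ℂ F} [Submodule.HasOrthogonalProjection U] [Submodule.HasOrthogonalProjection V]
    (h : U = V) :
    U.subtypeL ∘L Submodule.orthogonalProjectionOnto U = V.subtypeL ∘L Submodule.orthogonalProjectionOnto V := by
  subst h; rfl

lemma projCR_congr (T : E →L[ℂ] F) (S : E' →L[ℂ] F)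
    (h : (LinearMap.range (T : E →ₗ[ℂ] F)).topologicalClosure = (LinearMap.range (S : E' →ₗ[ℂ] F)).topologicalClosure) :
    projCR T = projCR S := by
  unfold projCR
  exact proj_congr h

lemma closure_idem (U : Submodule ℂ F) :
    U.topologicalClosure.topologicalClosure = U.topologicalClosure :=
  SetLike.ext' (by rw [Submodule.topologicalClosure_coe, Submodule.topologicalClosure_coe,
    closure_closure])

variable {T S : E →L[ℂ] F} {Td Sd : F →L[ℂ] E}

lemma mp_TdT (h : IsMPInv T Td) : T ∘L (Td ∘L T) = T := by
  rw [← ContinuousLinearMap.comp_assoc, h.1, projCR_comp]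

lemma mp_TdPT (h : IsMPInv T Td) : Td ∘L projCR T = Td := by
  rw [← h.1, h.2.2]

lemma mp_QTd (h : IsMPInv T Td) : projCR (adjoint T) ∘L Td = Td := by
  rw [← h.2.1, ContinuousLinearMap.comp_assoc, h.2.2]

/-- range of `Td` is the closure of the range of `adjoint T`. -/
lemma mp_range_Td (h : IsMPInv T Td) :
    LinearMap.range (Td : F →ₗ[ℂ] E) = (LinearMap.range ((adjoint T : F →L[ℂ] E) : F →ₗ[ℂ] E)).topologicalClosure := by
  apply le_antisymm
  · rintro x ⟨y, rfl⟩
    have := congrFun (congrArg DFunLike.coe (mp_QTd h)) y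
    simp only [comp_apply] at this
    rw [ContinuousLinearMap.coe_coe, ← this]
    exact projCR_apply_mem_s11 _ _
  · intro x hx
    have h1 : Td (T x) = x := by
      have := congrFun (congrArg DFunLike.coe h.2.1) x
      simp only [comp_apply] at this
      rw [this, projCR_apply_of_mem _ hx]
    exact ⟨T x, h1⟩

lemma mp_range_adjTd (h : IsMPInv T Td) :
    LinearMap.range ((adjoint Td : E →L[ℂ] F) : E →ₗ[ℂ] F) = (LinearMap.range (T : E →ₗ[ℂ] F)).topologicalClosure := by
  apply le_antisymm
  · rintro x ⟨y, rfl⟩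
    have hTd : adjoint Td = projCR T ∘L adjoint Td := by
      conv_lhs => rw [← mp_TdPT h]
      rw [adjoint_comp, adjoint_projCR]
    have := congrFun (congrArg DFunLike.coe hTd) y
    simp only [comp_apply] at this
    rw [ContinuousLinearMap.coe_coe, this]
    exact projCR_apply_mem_s11 _ _
  · intro x hx
    have h1 : adjoint Td (adjoint T x) = x := by
      have hP : adjoint Td ∘L adjoint T = projCR T := by
        rw [← adjoint_comp, h.1, adjoint_projCR]
      have := congrFun (congrArg DFunLike.coe hP) x
      simp only [comp_apply] at this
      rw [this, projCR_apply_of_mem _ hx]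
    exact ⟨adjoint T x, h1⟩

lemma projCR_Td (h : IsMPInv T Td) : projCR Td = projCR (adjoint T) :=
  projCR_congr _ _ (by rw [mp_range_Td h, closure_idem])

lemma projCR_adjTd (h : IsMPInv T Td) : projCR (adjoint Td) = projCR T :=
  projCR_congr _ _ (by rw [mp_range_adjTd h, closure_idem])

lemma mp_symm (h : IsMPInv T Td) : IsMPInv Td T := by
  refine ⟨?_, ?_, ?_⟩
  · rw [projCR_Td h, h.2.1]
  · rw [projCR_adjTd h]; exact h.1
  · exact mp_TdT h

/-- Star order characterization via projections. -/
lemma star_iff (h : IsMPInv T Td) :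
    (adjoint T ∘L T = adjoint T ∘L S ∧ T ∘L adjoint T = S ∘L adjoint T) ↔
    (T = projCR T ∘L S ∧ T = S ∘L projCR (adjoint T)) := by
  have hP : adjoint (projCR T) = projCR T := adjoint_projCR T
  have hQ : adjoint (projCR (adjoint T)) = projCR (adjoint T) := adjoint_projCR (adjoint T)
  have hPT : projCR T ∘L T = T := projCR_comp T
  have hTQ : T ∘L projCR (adjoint T) = T := by rw [← h.2.1, mp_TdT h]
  constructor
  · rintro ⟨h1, h2⟩
    constructor
    · calc T = projCR T ∘L T := hPT.symm
        _ = adjoint (projCR T) ∘L T := by rw [hP]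
        _ = adjoint (T ∘L Td) ∘L T := by rw [h.1]
        _ = adjoint Td ∘L (adjoint T ∘L T) := by
            rw [adjoint_comp, ContinuousLinearMap.comp_assoc]
        _ = adjoint Td ∘L (adjoint T ∘L S) := by rw [h1]
        _ = adjoint (T ∘L Td) ∘L S := by
            rw [adjoint_comp, ContinuousLinearMap.comp_assoc]
        _ = projCR T ∘L S := by rw [h.1, hP]
    · calc T = T ∘L projCR (adjoint T) := hTQ.symm
        _ = T ∘L adjoint (projCR (adjoint T)) := by rw [hQ]
        _ = T ∘L adjoint (Td ∘L T) := by rw [h.2.1]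
        _ = (T ∘L adjoint T) ∘L adjoint Td := by
            rw [adjoint_comp, ContinuousLinearMap.comp_assoc]
        _ = (S ∘L adjoint T) ∘L adjoint Td := by rw [h2]
        _ = S ∘L adjoint (Td ∘L T) := by
            rw [adjoint_comp, ContinuousLinearMap.comp_assoc]
        _ = S ∘L projCR (adjoint T) := by rw [h.2.1, hQ]
  · rintro ⟨h1, h2⟩
    constructor
    · have hAT : adjoint T = adjoint S ∘L projCR T := by
        conv_lhs => rw [h1]
        rw [adjoint_comp, hP]
      have key : adjoint T ∘L T = adjoint S ∘L T := by
        conv_lhs => rw [hAT]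
        rw [ContinuousLinearMap.comp_assoc, hPT]
      have := congrArg adjoint key
      rwa [adjoint_comp, adjoint_comp, adjoint_adjoint, adjoint_adjoint] at this
    · have hAT : adjoint T = projCR (adjoint T) ∘L adjoint S := by
        conv_lhs => rw [h2]
        rw [adjoint_comp, hQ]
      have key : T ∘L adjoint T = T ∘L adjoint S := by
        conv_lhs => rw [hAT]
        rw [← ContinuousLinearMap.comp_assoc, hTQ]
      have := congrArg adjoint key
      rwa [adjoint_comp, adjoint_comp, adjoint_adjoint, adjoint_adjoint] at this

lemma star_dual (hT : IsMPInv T Td) (hS : IsMPInv S Sd)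
    (h1 : T = projCR T ∘L S) (h2 : T = S ∘L projCR (adjoint T)) :
    Td = projCR (adjoint T) ∘L Sd ∧ Td = Sd ∘L projCR T := by
  have hPS_S : projCR S ∘L S = S := projCR_comp S
  -- (a) `P_S ∘ T = T`
  have ha : projCR S ∘L T = T := by
    conv_lhs => rw [h2, ← ContinuousLinearMap.comp_assoc, hPS_S]
    rw [← h2]
  -- (b) `P_S ∘ P_T = P_T` and `P_T ∘ P_S = P_T`
  have hb : projCR S ∘L projCR T = projCR T := by
    rw [← hT.1, ← ContinuousLinearMap.comp_assoc, ha]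
  have hb' : projCR T ∘L projCR S = projCR T := by
    have := congrArg adjoint hb
    rwa [adjoint_comp, adjoint_projCR, adjoint_projCR] at this
  -- (c) `T ∘ Sd = P_T`
  have hc : T ∘L Sd = projCR T := by
    conv_lhs => rw [h1, ContinuousLinearMap.comp_assoc, hS.1]
    exact hb' 
  constructor
  · -- `Td = Q_T ∘ Sd`
    rw [← hT.2.1, ContinuousLinearMap.comp_assoc, hc, mp_TdPT hT]
  · -- `Td = Sd ∘ P_T`
    have hQSQT : projCR (adjoint S) ∘L projCR (adjoint T) = projCR (adjoint T) := by
      have hf : projCR (adjoint S) ∘L adjoint T = adjoint T := by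
        have he : adjoint T = adjoint S ∘L projCR T := by
          conv_lhs => rw [h1, adjoint_comp, adjoint_projCR]
        have hSQS : projCR (adjoint S) ∘L adjoint S = adjoint S := projCR_comp (adjoint S)
        rw [he, ← ContinuousLinearMap.comp_assoc, hSQS]
      have hg : projCR (adjoint T) = adjoint T ∘L adjoint Td := by
        rw [← adjoint_comp, hT.2.1, adjoint_projCR]
      rw [hg, ← ContinuousLinearMap.comp_assoc, hf]
    have hk : Sd ∘L T = projCR (adjoint T) := by
      conv_lhs => rw [h2, ← ContinuousLinearMap.comp_assoc, hS.2.1]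
      exact hQSQT
    rw [← hT.1, ← ContinuousLinearMap.comp_assoc, hk, mp_QTd hT]

end Aux

variable {H K : Type*} [NormedAddCommGroup H] [InnerProductSpace ℂ H] [CompleteSpace H]
  [NormedAddCommGroup K] [InnerProductSpace ℂ K] [CompleteSpace K]

theorem stmt11 (A B : H →L[ℂ] K) (Ad Bd : K →L[ℂ] H)
    (hA : IsClosed (LinearMap.range (A : H →ₗ[ℂ] K) : Set K)) (hB : IsClosed (LinearMap.range (B : H →ₗ[ℂ] K) : Set K))
    (hAd : IsMPInv A Ad) (hBd : IsMPInv B Bd) :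
    ((adjoint A) ∘L A = (adjoint A) ∘L B ∧ A ∘L (adjoint A) = B ∘L (adjoint A)) ↔
    ((adjoint Ad) ∘L Ad = (adjoint Ad) ∘L Bd ∧ Ad ∘L (adjoint Ad) = Bd ∘L (adjoint Ad)) := by
  have hAd' : IsMPInv Ad A := mp_symm hAd
  have hBd' : IsMPInv Bd B := mp_symm hBd
  have e1 : projCR Ad = projCR (adjoint A) := projCR_Td hAd
  have e2 : projCR (adjoint Ad) = projCR A := projCR_adjTd hAd
  constructor
  · intro h
    obtain ⟨h1, h2⟩ := (star_iff hAd).1 h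
    obtain ⟨g1, g2⟩ := star_dual hAd hBd h1 h2
    exact (star_iff hAd').2 ⟨by rw [e1]; exact g1, by rw [e2]; exact g2⟩
  · intro h
    obtain ⟨h1, h2⟩ := (star_iff hAd').1 h
    obtain ⟨g1, g2⟩ := star_dual hAd' hBd' h1 h2
    rw [e2] at g1; rw [e1] at g2
    exact (star_iff hAd).2 ⟨g1, g2⟩
end

section
/- Let A, B ∈ L(H,K) with range(A) ⊆ range(B), range(A*) ⊆ range(B*), and B having closed range. Then A ≤⁻ B in the minus order if and only if B† A is idempotent, where B† is the bounded Moore-Penrose inverse of B. -/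
open ContinuousLinearMap

lemma projCR_fix {E F : Type*} [NormedAddCommGroup E] [InnerProductSpace ℂ E]
    [NormedAddCommGroup F] [InnerProductSpace ℂ F] [CompleteSpace F]
    (T : E →L[ℂ] F) {x : F} (hx : x ∈ (LinearMap.range (T : E →ₗ[ℂ] F)).topologicalClosure) :
    projCR T x = x := by
  haveI : CompleteSpace ((LinearMap.range (T : E →ₗ[ℂ] F)).topologicalClosure) :=
    (LinearMap.range (T : E →ₗ[ℂ] F)).isClosed_topologicalClosure.completeSpace_coe
  exact Submodule.starProjection_eq_self_iff.mpr hx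

lemma projCR_comp_s14 {E F G : Type*} [NormedAddCommGroup E] [InnerProductSpace ℂ E]
    [NormedAddCommGroup F] [InnerProductSpace ℂ F] [CompleteSpace F]
    [NormedAddCommGroup G] [InnerProductSpace ℂ G]
    (T : E →L[ℂ] F) (S : G →L[ℂ] F)
    (h : LinearMap.range (S : G →ₗ[ℂ] F) ≤ (LinearMap.range (T : E →ₗ[ℂ] F)).topologicalClosure) :
    projCR T ∘L S = S := by
  ext x
  exact projCR_fix T (h ⟨x, rfl⟩)

lemma projCR_selfAdjoint {E F : Type*} [NormedAddCommGroup E] [InnerProductSpace ℂ E]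
    [NormedAddCommGroup F] [InnerProductSpace ℂ F] [CompleteSpace F]
    (T : E →L[ℂ] F) : IsSelfAdjoint (projCR T) := by
  haveI : CompleteSpace ((LinearMap.range (T : E →ₗ[ℂ] F)).topologicalClosure) :=
    (LinearMap.range (T : E →ₗ[ℂ] F)).isClosed_topologicalClosure.completeSpace_coe
  exact isSelfAdjoint_starProjection _

variable {H K : Type*} [NormedAddCommGroup H] [InnerProductSpace ℂ H] [CompleteSpace H]
  [NormedAddCommGroup K] [InnerProductSpace ℂ K] [CompleteSpace K]

theorem stmt14 (A B : H →L[ℂ] K) (Bd : K →L[ℂ] H)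
    (hB : IsClosed (LinearMap.range (B : H →ₗ[ℂ] K) : Set K)) (hBd : IsMPInv B Bd)
    (h1 : LinearMap.range (A : H →ₗ[ℂ] K) ≤ LinearMap.range (B : H →ₗ[ℂ] K))
    (h2 : LinearMap.range (adjoint A : K →ₗ[ℂ] H) ≤ LinearMap.range (adjoint B : K →ₗ[ℂ] H)) :
    (∃ (Qt : K →L[ℂ] K) (Q : H →L[ℂ] H),
      Qt ∘L Qt = Qt ∧ Q ∘L Q = Q ∧ A = Qt ∘L B ∧ A = B ∘L Q) ↔
    (Bd ∘L A) ∘L (Bd ∘L A) = Bd ∘L A := by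
  obtain ⟨hP1, hP2, _⟩ := hBd
  have hle : LinearMap.range (B : H →ₗ[ℂ] K) ≤ (LinearMap.range (B : H →ₗ[ℂ] K)).topologicalClosure :=
    (LinearMap.range (B : H →ₗ[ℂ] K)).le_topologicalClosure
  have hBBdB : B ∘L (Bd ∘L B) = B := by
    rw [← comp_assoc, hP1]
    exact projCR_comp_s14 B B hle
  have hPA : projCR B ∘L A = A := projCR_comp_s14 B A (le_trans h1 hle)
  have hAP : A ∘L projCR (adjoint B) = A := by
    have hadj : projCR (adjoint B) ∘L adjoint A = adjoint A :=
      projCR_comp_s14 (adjoint B) (adjoint A)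
        (le_trans h2 (LinearMap.range (adjoint B : K →ₗ[ℂ] H)).le_topologicalClosure)
    have := congrArg adjoint hadj
    rw [adjoint_comp, (projCR_selfAdjoint (adjoint B)).adjoint_eq, adjoint_adjoint] at this
    exact this
  constructor
  · rintro ⟨Qt, Q, hQt, hQ, hA1, hA2⟩
    have a1 : ∀ y, A y = Qt (B y) := fun y => congrArg (fun T => T y) hA1
    have a2 : ∀ y, A y = B (Q y) := fun y => congrArg (fun T => T y) hA2
    have q : ∀ y, Q (Q y) = Q y := fun y => congrArg (fun T => T y) hQ
    have b : ∀ y, B (Bd (B y)) = B y := fun y => congrArg (fun T => T y) hBBdB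
    have key : ∀ x, A (Bd (A x)) = A x := by
      intro x
      calc A (Bd (A x)) = Qt (B (Bd (B (Q x)))) := by rw [a1 (Bd (A x)), a2 x]
        _ = Qt (B (Q x)) := by rw [b]
        _ = A (Q x) := (a1 _).symm
        _ = B (Q (Q x)) := a2 _
        _ = B (Q x) := by rw [q]
        _ = A x := (a2 x).symm
    ext x
    show Bd (A (Bd (A x))) = Bd (A x)
    rw [key]
  · intro h
    have hBQ : B ∘L (Bd ∘L A) = A := by rw [← comp_assoc, hP1, hPA]
    have hABdA : ∀ x, A (Bd (A x)) = A x := by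
      intro x
      have hpt : Bd (A (Bd (A x))) = Bd (A x) := congrArg (fun T => T x) h
      have h3 : B (Bd (A (Bd (A x)))) = A x := by
        rw [hpt]; exact congrArg (fun T => T x) hBQ
      have h4 : B (Bd (A (Bd (A x)))) = A (Bd (A x)) :=
        calc B (Bd (A (Bd (A x)))) = projCR B (A (Bd (A x))) :=
              congrArg (fun T => T (A (Bd (A x)))) hP1
          _ = A (Bd (A x)) := projCR_fix B (le_trans h1 hle ⟨_, rfl⟩)
      rw [← h4, h3]
    refine ⟨A ∘L Bd, Bd ∘L A, ?_, h, ?_, hBQ.symm⟩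
    · ext x
      show A (Bd (A (Bd x))) = A (Bd x)
      rw [hABdA]
    · ext x
      show A x = A (Bd (B x))
      calc A x = A (projCR (adjoint B) x) := (congrArg (fun T => T x) hAP).symm
        _ = A (Bd (B x)) := by rw [← congrArg (fun T => T x) hP2]; rfl
end
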